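/- For integers n > c ≥ q ≥ 1, every collection of directed graphs G_1, …, G_c on a common set of n vertices containing no rainbow S_{0,q} satisfies min_{1≤i≤c} e(G_i) ≤ ⌊n(q−1)/c⌋·(n−1) + r, where r is the remainder of n(q−1) upon division by c. -/

import Mathlib

open Finset

/-- König-type cover lemma: if there is no rainbow matching of size `q` between
colors and targets, there is a small cover. -/
lemma cover_lemma_aux (c q : ℕ) (hcq : q ≤ c) {V : Type*} [Fintype V] [DecidableEq V]
    (N : Fin c → Finset V)
    (h : ¬ ∃ (u : Fin q → V) (ι : Fin q → Fin c),
      Function.Injective u ∧ Function.Injective ι ∧ ∀ j, u j ∈ N (ι j)) :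
    ∃ (A : Finset (Fin c)) (B : Finset V),
      A.card + B.card + 1 ≤ q ∧ ∀ i ∉ A, N i ⊆ B := by
  classical
  set t' : Fin c → Finset (V ⊕ Fin (c - q)) :=
    fun i => (N i).image Sum.inl ∪ (univ : Finset (Fin (c - q))).image Sum.inr with ht'
  by_cases hh : ∀ s : Finset (Fin c), s.card ≤ (s.biUnion t').card
  · exfalso
    obtain ⟨f, finj, hf⟩ := (Finset.all_card_le_biUnion_card_iff_exists_injective t').mp hh
    set S : Finset (Fin c) := univ.filter (fun i => (f i).isLeft) with hS
    have hSc : Sᶜ.card ≤ c - q := by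
      have h1 : Sᶜ.image f ⊆ (univ : Finset (Fin (c - q))).image Sum.inr := by
        intro x hx
        obtain ⟨i, hi, rfl⟩ := Finset.mem_image.mp hx
        have hnl : ¬ (f i).isLeft := by
          intro hl
          exact (Finset.mem_compl.mp hi) (Finset.mem_filter.mpr ⟨mem_univ _, hl⟩)
        obtain ⟨y, hy⟩ := Sum.isRight_iff.mp (Sum.not_isLeft.mp hnl)
        rw [hy]
        exact Finset.mem_image_of_mem _ (mem_univ y)
      have h2 : (Sᶜ.image f).card = Sᶜ.card :=
        Finset.card_image_of_injective Sᶜ finj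
      have h3 : ((univ : Finset (Fin (c - q))).image (Sum.inr : Fin (c - q) → V ⊕ Fin (c - q))).card = c - q := by
        rw [Finset.card_image_of_injective _ (Sum.inr_injective (α := V)), card_univ, Fintype.card_fin]
      calc Sᶜ.card = (Sᶜ.image f).card := h2.symm
        _ ≤ _ := Finset.card_le_card h1
        _ = c - q := h3
    have hScard : q ≤ S.card := by
      have := Finset.card_add_card_compl S
      rw [Fintype.card_fin] at this
      omega
    obtain ⟨S', hS'sub, hS'card⟩ := Finset.exists_subset_card_eq hScard
    set ι : Fin q → Fin c := fun j => S'.orderEmbOfFin hS'card j with hι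
    have hιinj : Function.Injective ι := (S'.orderEmbOfFin hS'card).injective
    have hιS : ∀ j, ι j ∈ S := fun j => hS'sub (S'.orderEmbOfFin_mem hS'card j)
    have hleft : ∀ j, ∃ x, f (ι j) = Sum.inl x := by
      intro j
      have := (Finset.mem_filter.mp (hιS j)).2
      rcases hfi : f (ι j) with x | y
      · exact ⟨x, rfl⟩
      · rw [hfi] at this; simp at this
    choose u hu using hleft
    have huinj : Function.Injective u := by
      intro j₁ j₂ he
      apply hιinj
      apply finj
      rw [hu j₁, hu j₂, he]
    apply h
    refine ⟨u, ι, huinj, hιinj, fun j => ?_⟩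
    have := hf (ι j)
    rw [hu j] at this
    simp only [ht', Finset.mem_union, Finset.mem_image] at this
    rcases this with ⟨a, ha, hae⟩ | ⟨b, _, hbe⟩
    · rw [Sum.inl.injEq] at hae
      rwa [← hae]
    · exact absurd hbe (by simp)
  · push_neg at hh
    obtain ⟨S, hS⟩ := hh
    have hSne : S.Nonempty := by
      rcases S.eq_empty_or_nonempty with rfl | hne
      · simp at hS
      · exact hne
    obtain ⟨i₀, hi₀⟩ := hSne
    set B : Finset V := S.biUnion N with hB
    have hsub : B.image Sum.inl ∪ (univ : Finset (Fin (c - q))).image Sum.inr ⊆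
        S.biUnion t' := by
      intro x hx
      rcases Finset.mem_union.mp hx with hx | hx
      · obtain ⟨a, ha, rfl⟩ := Finset.mem_image.mp hx
        obtain ⟨i, hiS, haN⟩ := Finset.mem_biUnion.mp ha
        exact Finset.mem_biUnion.mpr ⟨i, hiS,
          Finset.mem_union_left _ (Finset.mem_image_of_mem _ haN)⟩
      · obtain ⟨d, _, rfl⟩ := Finset.mem_image.mp hx
        exact Finset.mem_biUnion.mpr ⟨i₀, hi₀,
          Finset.mem_union_right _ (Finset.mem_image_of_mem _ (mem_univ d))⟩
    have hdisj : Disjoint (B.image Sum.inl)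
        ((univ : Finset (Fin (c - q))).image Sum.inr) := by
      rw [Finset.disjoint_left]
      rintro x hx1 hx2
      obtain ⟨a, _, rfl⟩ := Finset.mem_image.mp hx1
      obtain ⟨b, _, hb⟩ := Finset.mem_image.mp hx2
      exact absurd hb (by simp)
    have hcard : B.card + (c - q) ≤ (S.biUnion t').card := by
      have h1 : (B.image Sum.inl ∪ (univ : Finset (Fin (c - q))).image Sum.inr).card
          = B.card + (c - q) := by
        rw [Finset.card_union_of_disjoint hdisj,
          Finset.card_image_of_injective _ Sum.inl_injective,
          Finset.card_image_of_injective _ (Sum.inr_injective (α := V)), card_univ, Fintype.card_fin]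
      rw [← h1]
      exact Finset.card_le_card hsub
    refine ⟨Sᶜ, B, ?_, ?_⟩
    · have h1 : S.card ≤ c := by
        have := Finset.card_le_univ S
        rwa [Fintype.card_fin] at this
      have h2 : Sᶜ.card = c - S.card := by
        rw [Finset.card_compl, Fintype.card_fin]
      omega
    · intro i hi x hx
      rw [Finset.notMem_compl] at hi
      exact Finset.mem_biUnion.mpr ⟨i, hi, hx⟩

/-- Minimum version: some color class has at most `⌊n(q-1)/c⌋(n-1) + r` edges,
where `r = n(q-1) mod c`. -/
theorem min_edges_le_of_no_rainbow_out_star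
    (n c q : ℕ) (hnc : n > c) (hcq : c ≥ q) (hq : q ≥ 1)
    (V : Type*) [Fintype V] [DecidableEq V] (hV : Fintype.card V = n)
    (G : Fin c → Finset (V × V))
    (hloop : ∀ i v, (v, v) ∉ G i)
    (hrb : ¬ ∃ (v : V) (u : Fin q → V) (ι : Fin q → Fin c),
      Function.Injective u ∧ Function.Injective ι ∧
      ∀ j, u j ≠ v ∧ (v, u j) ∈ G (ι j)) :
    ∃ i : Fin c, (G i).card ≤ (n * (q - 1) / c) * (n - 1) + n * (q - 1) % c := by
  classical
  have hc0 : 0 < c := lt_of_lt_of_le hq hcq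
  -- per-vertex cover
  have hcov : ∀ v : V, ∃ (A : Finset (Fin c)) (B : Finset V),
      A.card + B.card + 1 ≤ q ∧ ∀ i ∉ A, ∀ u : V, (v, u) ∈ G i → u ∈ B := by
    intro v
    have hnr : ¬ ∃ (u : Fin q → V) (ι : Fin q → Fin c),
        Function.Injective u ∧ Function.Injective ι ∧
        ∀ j, u j ∈ (fun i => univ.filter (fun u => (v, u) ∈ G i)) (ι j) := by
      rintro ⟨u, ι, hu, hι, hj⟩
      apply hrb
      refine ⟨v, u, ι, hu, hι, fun j => ?_⟩
      have hm := (Finset.mem_filter.mp (hj j)).2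
      exact ⟨fun e => hloop (ι j) v (e ▸ hm), hm⟩
    obtain ⟨A, B, h1, h2⟩ := cover_lemma_aux c q hcq
      (fun i => univ.filter (fun u => (v, u) ∈ G i)) hnr
    exact ⟨A, B, h1, fun i hi u hu =>
        h2 i hi (Finset.mem_filter.mpr ⟨mem_univ u, hu⟩)⟩
  choose A B hab hcovv using hcov
  set t : Fin c → ℕ := fun i => (univ.filter (fun v => i ∈ A v)).card with hts
  obtain ⟨i₀, -, hmin⟩ := Finset.exists_min_image univ t ⟨⟨0, hc0⟩, mem_univ _⟩
  -- sum of t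
  have hsum_t : ∑ i, t i = ∑ v, (A v).card := by
    calc ∑ i, t i = ∑ i, ∑ v, (if i ∈ A v then 1 else 0) :=
          Finset.sum_congr rfl fun i _ => Finset.card_filter _ _
      _ = ∑ v, ∑ i, (if i ∈ A v then 1 else 0) := Finset.sum_comm
      _ = ∑ v, (A v).card := by
          refine Finset.sum_congr rfl fun v _ => ?_
          rw [← Finset.card_filter]
          congr 1
          simp
  have hck : c * t i₀ ≤ ∑ v, (A v).card := by
    rw [← hsum_t]
    calc c * t i₀ = ∑ _i : Fin c, t i₀ := by
          rw [Finset.sum_const, card_univ, Fintype.card_fin, smul_eq_mul]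
      _ ≤ ∑ i, t i := Finset.sum_le_sum (fun i _ => hmin i (mem_univ i))
  -- edge count bound for i₀
  have hedge : (G i₀).card ≤ (n - 1) * t i₀ + ∑ v, (B v).card := by
    have h1 : (G i₀).card = ∑ v : V, ((G i₀).filter (fun p => p.1 = v)).card :=
      Finset.card_eq_sum_card_fiberwise (fun p _ => mem_univ _)
    rw [h1]
    have hfib : ∀ v : V, ((G i₀).filter (fun p => p.1 = v)).card
        ≤ (if i₀ ∈ A v then n - 1 else 0) + (B v).card := by
      intro v
      by_cases hA : i₀ ∈ A v
      · rw [if_pos hA]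
        have : ((G i₀).filter (fun p => p.1 = v)).card ≤ n - 1 := by
          have hcard : (univ.erase v).card = n - 1 := by
            rw [Finset.card_erase_of_mem (mem_univ v), card_univ, hV]
          rw [← hcard]
          apply Finset.card_le_card_of_injOn (fun p => p.2)
          · intro p hp
            obtain ⟨hpG, hp1⟩ := Finset.mem_filter.mp hp
            refine Finset.mem_erase.mpr ⟨?_, mem_univ _⟩
            intro he
            apply hloop i₀ v
            have hpe : p = (v, v) := Prod.ext hp1 he
            rwa [hpe] at hpG
          · intro p₁ h₁ p₂ h₂ he
            have e1 := (Finset.mem_filter.mp h₁).2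
            have e2 := (Finset.mem_filter.mp h₂).2
            exact Prod.ext (e1.trans e2.symm) he
        omega
      · rw [if_neg hA, zero_add]
        apply Finset.card_le_card_of_injOn (fun p => p.2)
        · intro p hp
          obtain ⟨hpG, hp1⟩ := Finset.mem_filter.mp hp
          apply hcovv v i₀ hA p.2
          have hpe : (v, p.2) = p := by
            rw [← hp1]
          rwa [hpe]
        · intro p₁ h₁ p₂ h₂ he
          have e1 := (Finset.mem_filter.mp h₁).2
          have e2 := (Finset.mem_filter.mp h₂).2
          exact Prod.ext (e1.trans e2.symm) he
    calc ∑ v : V, ((G i₀).filter (fun p => p.1 = v)).card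
        ≤ ∑ v : V, ((if i₀ ∈ A v then n - 1 else 0) + (B v).card) :=
          Finset.sum_le_sum (fun v _ => hfib v)
      _ = (∑ v : V, (if i₀ ∈ A v then n - 1 else 0)) + ∑ v, (B v).card := by
          rw [Finset.sum_add_distrib]
      _ = (n - 1) * t i₀ + ∑ v, (B v).card := by
          congr 1
          rw [hts]
          rw [← Finset.sum_filter]
          rw [Finset.sum_const, smul_eq_mul, mul_comm]
  -- total bound on sums
  have hPQ : (∑ v, (A v).card) + (∑ v, (B v).card) ≤ n * (q - 1) := by
    rw [← Finset.sum_add_distrib]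
    calc ∑ v, ((A v).card + (B v).card) ≤ ∑ _v : V, (q - 1) :=
          Finset.sum_le_sum (fun v _ => by have := hab v; omega)
      _ = n * (q - 1) := by rw [Finset.sum_const, card_univ, hV, smul_eq_mul]
  -- arithmetic conclusion
  refine ⟨i₀, ?_⟩
  set P := ∑ v, (A v).card with hP
  set Q := ∑ v, (B v).card with hQdef
  set k := t i₀ with hk
  set D := n * (q - 1) / c with hD
  set r := n * (q - 1) % c with hr
  have hDr : c * D + r = n * (q - 1) := Nat.div_add_mod _ _
  have hrc : r < c := Nat.mod_lt _ hc0
  have hkD : k ≤ D := by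
    by_contra hcon
    push_neg at hcon
    have h1 : c * (D + 1) ≤ c * k := Nat.mul_le_mul_left c hcon
    have h2 : c * (D + 1) = c * D + c := by ring
    have h3 : c * k ≤ n * (q - 1) := le_trans hck (by omega)
    linarith
  obtain ⟨m, hm⟩ := Nat.exists_eq_add_of_le hkD
  have hcm : c * D = c * k + c * m := by rw [hm, mul_add]
  have hQ : Q ≤ c * m + r := by
    have h1 : c * k + Q ≤ c * k + (c * m + r) := by linarith
    linarith
  have hcn : c ≤ n - 1 := by omega
  calc (G i₀).card ≤ (n - 1) * k + Q := hedge
    _ ≤ (n - 1) * k + (c * m + r) := by linarith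
    _ ≤ (n - 1) * k + ((n - 1) * m + r) := by
        have := Nat.mul_le_mul_right m hcn
        linarith
    _ = (n - 1) * (k + m) + r := by ring
    _ = D * (n - 1) + r := by rw [hm]; ring
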